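/- Sharp constant in the C_p lower bound (Lemma 2.7, Huang–Tong): Let p ≥ 2. The sharp constant c₁(p) := inf_{(s,t)∈ℝ²\{(0,0)}} [ (t²+s²+2s+1)^{p/2} − 1 − ps ] / (t²+s²)^{p/2} equals (p−1)(1−k₀)^p + p·k₀(1−k₀)^{p−1} + k₀^p > 0, where k₀ = r₀/(1+r₀) and r₀ is the unique solution in [1,∞) of r^{p−1} − (p−1)r − (p−2) = 0 (r₀ = 1 when p = 2). -/

import Mathlib

/-- The sharp constant `c₁(p)`: the infimum over `(s,t) ≠ (0,0)` of
`[(t²+s²+2s+1)^{p/2} - 1 - ps] / (t²+s²)^{p/2}`. -/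
noncomputable def c1 (p : ℝ) : ℝ :=
  sInf { r : ℝ | ∃ s t : ℝ, ¬(s = 0 ∧ t = 0) ∧
    r = ((t ^ 2 + s ^ 2 + 2 * s + 1) ^ (p / 2) - 1 - p * s) / (t ^ 2 + s ^ 2) ^ (p / 2) }

open Real Set

noncomputable def Phi (p k : ℝ) : ℝ := k ^ p + p * (1-k) ^ (p-1) - (1-k) ^ p
noncomputable def PhiD (p k : ℝ) : ℝ := p * k ^ (p-1) + p * (1-k) ^ (p-1) - p * (p-1) * (1-k) ^ (p-2)

lemma phi_hasDeriv (p : ℝ) (hp : 2 ≤ p) {x : ℝ} (hx0 : 0 < x) (hx1 : x < 1) :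
    HasDerivAt (Phi p) (PhiD p x) x := by
  have h1x : (1:ℝ) - x ≠ 0 := by linarith
  have hder1 : HasDerivAt (fun k : ℝ => (1-k)) (-1) x := by
    simpa using (hasDerivAt_id x).const_sub 1
  have hA : HasDerivAt (fun k : ℝ => k ^ p) (p * x ^ (p-1)) x :=
    Real.hasDerivAt_rpow_const (Or.inl (ne_of_gt hx0))
  have hB : HasDerivAt (fun k : ℝ => (1-k) ^ (p-1)) ((p-1) * (1-x) ^ (p-1-1) * (-1)) x :=
    (Real.hasDerivAt_rpow_const (Or.inl h1x)).comp x hder1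
  have hC : HasDerivAt (fun k : ℝ => (1-k) ^ p) (p * (1-x) ^ (p-1) * (-1)) x :=
    (Real.hasDerivAt_rpow_const (Or.inl h1x)).comp x hder1
  have := (hA.add (hB.const_mul p)).sub hC
  refine this.congr_deriv ?_
  unfold PhiD
  rw [show p - 1 - 1 = p - 2 by ring]
  ring

lemma phiD_hasDeriv (p : ℝ) (hp : 2 ≤ p) {x : ℝ} (hx0 : 0 < x) (hx1 : x < 1) :
    HasDerivAt (PhiD p)
      (p * (p-1) * x ^ (p-2) - p * (p-1) * (1-x) ^ (p-2) + p * (p-1) * (p-2) * (1-x) ^ (p-3)) x := by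
  have h1x : (1:ℝ) - x ≠ 0 := by linarith
  have hder1 : HasDerivAt (fun k : ℝ => (1-k)) (-1) x := by
    simpa using (hasDerivAt_id x).const_sub 1
  have hA : HasDerivAt (fun k : ℝ => k ^ (p-1)) ((p-1) * x ^ (p-1-1)) x :=
    Real.hasDerivAt_rpow_const (Or.inl (ne_of_gt hx0))
  have hB : HasDerivAt (fun k : ℝ => (1-k) ^ (p-1)) ((p-1) * (1-x) ^ (p-1-1) * (-1)) x :=
    (Real.hasDerivAt_rpow_const (Or.inl h1x)).comp x hder1
  have hC : HasDerivAt (fun k : ℝ => (1-k) ^ (p-2)) ((p-2) * (1-x) ^ (p-2-1) * (-1)) x :=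
    (Real.hasDerivAt_rpow_const (Or.inl h1x)).comp x hder1
  have := ((hA.const_mul p).add (hB.const_mul p)).sub (hC.const_mul (p * (p-1)))
  refine this.congr_deriv ?_
  rw [show p - 1 - 1 = p - 2 by ring, show p - 2 - 1 = p - 3 by ring]
  ring

lemma phiD_mono (p : ℝ) (hp : 2 ≤ p) : MonotoneOn (PhiD p) (Ico (1/2 : ℝ) 1) := by
  have hconv : Convex ℝ (Ico (1/2 : ℝ) 1) := convex_Ico _ _
  have hmem : ∀ x ∈ Ico (1/2 : ℝ) 1, 0 < x ∧ x < 1 := by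
    rintro x ⟨h1, h2⟩; exact ⟨by linarith, h2⟩
  have hcont : ContinuousOn (PhiD p) (Ico (1/2 : ℝ) 1) := fun x hx =>
    ((phiD_hasDeriv p hp (hmem x hx).1 (hmem x hx).2).continuousAt).continuousWithinAt
  have hint : interior (Ico (1/2 : ℝ) 1) = Ioo (1/2 : ℝ) 1 := interior_Ico
  refine monotoneOn_of_deriv_nonneg hconv hcont ?_ ?_
  · rw [hint]
    intro x hx
    exact ((phiD_hasDeriv p hp (by linarith [hx.1]) hx.2).differentiableAt).differentiableWithinAt
  · rw [hint]
    intro x hx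
    have hx0 : (0:ℝ) < x := by linarith [hx.1]
    have h1x : (0:ℝ) < 1 - x := by linarith [hx.2]
    rw [(phiD_hasDeriv p hp hx0 hx.2).deriv]
    have h1 : (1-x) ^ (p-2) ≤ x ^ (p-2) :=
      Real.rpow_le_rpow (le_of_lt h1x) (by linarith [hx.1]) (by linarith)
    have h2 : (0:ℝ) ≤ (1-x) ^ (p-3) := Real.rpow_nonneg (le_of_lt h1x) _
    have hpp : (0:ℝ) < p * (p-1) := by nlinarith
    nlinarith [mul_le_mul_of_nonneg_left h1 (le_of_lt hpp), mul_nonneg (mul_nonneg (le_of_lt hpp) (by linarith : (0:ℝ) ≤ p - 2)) h2]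

set_option maxHeartbeats 1000000 in
lemma phi_min (p : ℝ) (hp : 2 ≤ p) (r₀ : ℝ) (hr₀ : 1 ≤ r₀)
    (hroot : r₀ ^ (p - 1) - (p - 1) * r₀ - (p - 2) = 0) :
    ∀ k ∈ Ico (1/2 : ℝ) 1, Phi p (r₀ / (1 + r₀)) ≤ Phi p k := by
  set k₀ := r₀ / (1 + r₀) with hk₀
  have hb : (0:ℝ) < 1 + r₀ := by linarith
  have hk₀mem : k₀ ∈ Ico (1/2 : ℝ) 1 := by
    constructor
    · rw [hk₀, le_div_iff₀ hb]; linarith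
    · rw [hk₀, div_lt_one hb]; linarith
  -- PhiD p k₀ = 0
  have h1k₀ : 1 - k₀ = 1 / (1 + r₀) := by
    rw [hk₀]; field_simp; ring
  have hPhiD0 : PhiD p k₀ = 0 := by
    have hr0 : (0:ℝ) ≤ r₀ := by linarith
    have e1 : k₀ ^ (p-1) = r₀ ^ (p-1) / (1+r₀) ^ (p-1) := by
      rw [hk₀, Real.div_rpow hr0 (le_of_lt hb)]
    have e2 : (1-k₀) ^ (p-1) = 1 / (1+r₀) ^ (p-1) := by
      rw [h1k₀, Real.div_rpow zero_le_one (le_of_lt hb), Real.one_rpow]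
    have e3 : (1-k₀) ^ (p-2) = (1+r₀) / (1+r₀) ^ (p-1) := by
      rw [h1k₀, one_div, Real.inv_rpow (le_of_lt hb),
        show p - 1 = (p-2) + 1 by ring, Real.rpow_add_one (ne_of_gt hb)]
      field_simp
    unfold PhiD
    rw [e1, e2, e3]
    have hbp : (0:ℝ) < (1+r₀) ^ (p-1) := Real.rpow_pos_of_pos hb _
    field_simp
    nlinarith [hroot]
  -- min
  intro k hk
  rcases le_or_gt k₀ k with hle | hlt
  · -- Phi monotone on [k₀, k]
    have hsub : Icc k₀ k ⊆ Ico (1/2:ℝ) 1 := by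
      intro x hx; exact ⟨le_trans hk₀mem.1 hx.1, lt_of_le_of_lt hx.2 hk.2⟩
    have hmono : MonotoneOn (Phi p) (Icc k₀ k) := by
      refine monotoneOn_of_deriv_nonneg (convex_Icc _ _) ?_ ?_ ?_
      · intro x hx
        have := hsub hx
        exact ((phi_hasDeriv p hp (by linarith [this.1]) this.2).continuousAt).continuousWithinAt
      · intro x hx
        rw [interior_Icc] at hx
        have := hsub (Ioo_subset_Icc_self hx)
        exact ((phi_hasDeriv p hp (by linarith [this.1]) this.2).differentiableAt).differentiableWithinAt
      · intro x hx
        rw [interior_Icc] at hx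
        have hxm := hsub (Ioo_subset_Icc_self hx)
        rw [(phi_hasDeriv p hp (by linarith [hxm.1]) hxm.2).deriv]
        have := phiD_mono p hp hk₀mem hxm (le_of_lt hx.1)
        rw [hPhiD0] at this
        exact this
    exact hmono (left_mem_Icc.mpr hle) (right_mem_Icc.mpr hle) hle
  · -- Phi antitone on [k, k₀]
    have hsub : Icc k k₀ ⊆ Ico (1/2:ℝ) 1 := by
      intro x hx; exact ⟨le_trans hk.1 hx.1, lt_of_le_of_lt hx.2 hk₀mem.2⟩
    have hanti : AntitoneOn (Phi p) (Icc k k₀) := by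
      refine antitoneOn_of_deriv_nonpos (convex_Icc _ _) ?_ ?_ ?_
      · intro x hx
        have := hsub hx
        exact ((phi_hasDeriv p hp (by linarith [this.1]) this.2).continuousAt).continuousWithinAt
      · intro x hx
        rw [interior_Icc] at hx
        have := hsub (Ioo_subset_Icc_self hx)
        exact ((phi_hasDeriv p hp (by linarith [this.1]) this.2).differentiableAt).differentiableWithinAt
      · intro x hx
        rw [interior_Icc] at hx
        have hxm := hsub (Ioo_subset_Icc_self hx)
        rw [(phi_hasDeriv p hp (by linarith [hxm.1]) hxm.2).deriv]
        have := phiD_mono p hp hxm hk₀mem (le_of_lt hx.2)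
        rw [hPhiD0] at this
        exact this
    exact hanti (left_mem_Icc.mpr (le_of_lt hlt)) (right_mem_Icc.mpr (le_of_lt hlt)) (le_of_lt hlt)

lemma phi_scale (p ρ : ℝ) (hp : 2 ≤ p) (hρ : 1 ≤ ρ) :
    Phi p ((ρ-1)/ρ) * ρ ^ p = (ρ-1) ^ p + p * ρ - 1 := by
  have hρ0 : (0:ℝ) < ρ := by linarith
  have h1 : 1 - (ρ-1)/ρ = 1/ρ := by field_simp; ring
  have e1 : ((ρ-1)/ρ) ^ p = (ρ-1)^p / ρ^p := Real.div_rpow (by linarith) hρ0.le _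
  have e2 : ((1:ℝ)/ρ) ^ (p-1) = 1 / ρ^(p-1) := by
    rw [Real.div_rpow zero_le_one hρ0.le, Real.one_rpow]
  have e3 : ((1:ℝ)/ρ) ^ p = 1 / ρ^p := by
    rw [Real.div_rpow zero_le_one hρ0.le, Real.one_rpow]
  have e4 : ρ ^ p = ρ^(p-1) * ρ := by
    rw [← Real.rpow_add_one (ne_of_gt hρ0), show p - 1 + 1 = p by ring]
  have hp1 : (0:ℝ) < ρ^(p-1) := Real.rpow_pos_of_pos hρ0 _
  have hpp : (0:ℝ) < ρ^p := Real.rpow_pos_of_pos hρ0 _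
  unfold Phi
  rw [h1, e1, e2, e3]
  field_simp
  rw [e4]; ring

lemma phi_pos (p : ℝ) (hp : 2 ≤ p) {k : ℝ} (h0 : 0 < k) (h1 : k < 1) : 0 < Phi p k := by
  have h1k : (0:ℝ) < 1 - k := by linarith
  have e : (1-k)^p = (1-k)^(p-1) * (1-k) := by
    rw [← Real.rpow_add_one (ne_of_gt h1k), show p - 1 + 1 = p by ring]
  have hkp : 0 < k ^ p := Real.rpow_pos_of_pos h0 _
  have hY : 0 < (1-k)^(p-1) := Real.rpow_pos_of_pos h1k _
  unfold Phi
  nlinarith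

lemma rpow_diff_ge (q A B : ℝ) (hq : 1 ≤ q) (hA1 : 1 ≤ A) (hBA : A ≤ B) :
    A^q + q * (B - A) ≤ B^q := by
  have hA0 : (0:ℝ) < A := by linarith
  have hB0 : (0:ℝ) ≤ B := by linarith
  have hx : -1 ≤ B/A - 1 := by
    have : 0 ≤ B/A := div_nonneg hB0 hA0.le
    linarith
  have h1 : 1 + q * (B/A - 1) ≤ (B/A)^q := by
    have := one_add_mul_self_le_rpow_one_add hx hq
    calc 1 + q * (B/A - 1) ≤ (1 + (B/A - 1))^q := this
    _ = (B/A)^q := by ring_nf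
  have h2 : (B/A)^q = B^q / A^q := Real.div_rpow hB0 hA0.le _
  have hAp : 0 < A^q := Real.rpow_pos_of_pos hA0 _
  have h3 : A^q * (1 + q * (B/A - 1)) ≤ B^q := by
    rw [h2] at h1
    calc A^q * (1 + q * (B/A - 1)) ≤ A^q * (B^q/A^q) :=
      mul_le_mul_of_nonneg_left h1 hAp.le
    _ = B^q := by field_simp
  have h4 : A^q * (1 + q * (B/A - 1)) = A^q + q * (B - A) * (A^q/A) := by
    field_simp
  have h5 : (1:ℝ) ≤ A^q / A := by
    rw [show A^q/A = A^q / A^(1:ℝ) by rw [Real.rpow_one], ← Real.rpow_sub hA0]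
    calc (1:ℝ) = 1 ^ (q - 1) := (Real.one_rpow _).symm
    _ ≤ A ^ (q - 1) := Real.rpow_le_rpow zero_le_one hA1 (by linarith)
  nlinarith [h3, h4, h5, hBA, mul_nonneg (mul_nonneg (by linarith : (0:ℝ) ≤ q) (by linarith : (0:ℝ) ≤ B - A)) (by linarith : (0:ℝ) ≤ A^q/A - 1)]

set_option maxHeartbeats 1000000 in
lemma lower_bound (p : ℝ) (hp : 2 ≤ p) (r₀ : ℝ) (hr₀ : 1 ≤ r₀)
    (hroot : r₀ ^ (p - 1) - (p - 1) * r₀ - (p - 2) = 0) (s t : ℝ) (h : ¬(s = 0 ∧ t = 0)) :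
    Phi p (r₀ / (1 + r₀)) ≤
      ((t ^ 2 + s ^ 2 + 2 * s + 1) ^ (p / 2) - 1 - p * s) / (t ^ 2 + s ^ 2) ^ (p / 2) := by
  obtain ⟨C, hC⟩ : ∃ C, C = Phi p (r₀ / (1 + r₀)) := ⟨_, rfl⟩
  rw [← hC]
  have hb : (0:ℝ) < 1 + r₀ := by linarith
  have hCpos : 0 < C := by
    rw [hC]
    apply phi_pos p hp
    · positivity
    · rw [div_lt_one hb]; linarith
  have hst : 0 < s^2 + t^2 := by
    rcases lt_or_eq_of_le (by positivity : (0:ℝ) ≤ s^2 + t^2) with h' | h'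
    · exact h'
    · exfalso; apply h; constructor <;> nlinarith [sq_nonneg s, sq_nonneg t]
  obtain ⟨ρ, hρdef⟩ : ∃ ρ, ρ = Real.sqrt (s^2 + t^2) := ⟨_, rfl⟩
  have hρ : 0 < ρ := hρdef ▸ Real.sqrt_pos.mpr hst
  have hρ2 : ρ^(2:ℕ) = s^2 + t^2 := hρdef ▸ Real.sq_sqrt hst.le
  have den : (t^2 + s^2) ^ (p/2) = ρ ^ p := by
    rw [show t^2+s^2 = ρ^(2:ℕ) by rw [hρ2]; ring, ← Real.rpow_natCast ρ 2,
      ← Real.rpow_mul hρ.le]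
    congr 1; push_cast; ring
  have hρp : 0 < ρ ^ p := Real.rpow_pos_of_pos hρ _
  have hsabs : -ρ ≤ s ∧ s ≤ ρ := by
    have h1 : |s| ≤ ρ := by
      rw [hρdef, ← Real.sqrt_sq_eq_abs]
      exact Real.sqrt_le_sqrt (by nlinarith [sq_nonneg t])
    exact ⟨neg_le_of_abs_le h1, le_of_abs_le h1⟩
  rw [den, le_div_iff₀ hρp]
  rcases le_or_gt ρ 2 with hρle | hρgt
  · -- small ρ : Bernoulli
    have hx : -1 ≤ s^2 + t^2 + 2*s := by nlinarith [sq_nonneg (s+1), sq_nonneg t]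
    have hbern : 1 + (p/2) * (s^2 + t^2 + 2*s) ≤ (1 + (s^2 + t^2 + 2*s)) ^ (p/2) :=
      one_add_mul_self_le_rpow_one_add hx (by linarith)
    have hN : t^2 + s^2 + 2*s + 1 = 1 + (s^2 + t^2 + 2*s) := by ring
    rw [hN]
    have hhalf : (1/2 : ℝ) ∈ Ico (1/2:ℝ) 1 := by norm_num
    have hCle : C ≤ p * (1/2:ℝ) ^ (p-1) := by
      have h1 := phi_min p hp r₀ hr₀ hroot (1/2) hhalf
      have heq : Phi p (1/2) = p * (1/2:ℝ)^(p-1) := by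
        unfold Phi; ring
      rw [← hC, heq] at h1
      exact h1
    have hρsplit : ρ ^ p = ρ^(2:ℕ) * ρ^(p-2) := by
      rw [← Real.rpow_natCast ρ 2, ← Real.rpow_add hρ]
      congr 1; push_cast; ring
    have hρp2 : ρ^(p-2) ≤ (2:ℝ)^(p-2) :=
      Real.rpow_le_rpow hρ.le hρle (by linarith)
    have hpow : (1/2:ℝ)^(p-1) * (2:ℝ)^(p-2) = 1/2 := by
      rw [one_div, Real.inv_rpow (by norm_num), inv_mul_eq_div, ← Real.rpow_sub (by norm_num),
        show p - 2 - (p-1) = -1 by ring, Real.rpow_neg_one]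
    have h2p2 : (0:ℝ) < (2:ℝ)^(p-2) := Real.rpow_pos_of_pos (by norm_num) _
    have hkey : C * ρ ^ p ≤ (p/2) * (s^2 + t^2) := by
      rw [hρsplit, hρ2]
      have cc1 : C * ((s^2+t^2) * ρ^(p-2)) ≤ C * ((s^2+t^2) * (2:ℝ)^(p-2)) := by
        apply mul_le_mul_of_nonneg_left _ hCpos.le
        exact mul_le_mul_of_nonneg_left hρp2 hst.le
      have cc2 : C * ((s^2+t^2) * (2:ℝ)^(p-2)) ≤ p * (1/2:ℝ)^(p-1) * (2:ℝ)^(p-2) * (s^2+t^2) := by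
        have := mul_le_mul_of_nonneg_right hCle (by positivity : (0:ℝ) ≤ (2:ℝ)^(p-2) * (s^2+t^2))
        nlinarith
      have cc3 : p * (1/2:ℝ)^(p-1) * (2:ℝ)^(p-2) * (s^2+t^2) = (p/2) * (s^2+t^2) := by
        rw [mul_assoc p, hpow]; ring
      linarith [cc1, cc2, cc3]
    nlinarith [hbern, hkey, hρp]
  · -- large ρ
    have hρ1 : (1:ℝ) ≤ ρ - 1 := by linarith
    obtain ⟨A, hA⟩ : ∃ A, A = ((ρ-1)^(2:ℕ) : ℝ) := ⟨_, rfl⟩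
    obtain ⟨B, hB⟩ : ∃ B, B = t^2 + s^2 + 2*s + 1 := ⟨_, rfl⟩
    rw [← hB]
    have hA1 : (1:ℝ) ≤ A := by rw [hA]; nlinarith
    have hA0 : (0:ℝ) < A := by linarith
    have hBA : A ≤ B := by rw [hA, hB]; nlinarith [hρ2, hsabs.1]
    have key : A^(p/2) + (p/2) * (B - A) ≤ B^(p/2) :=
      rpow_diff_ge (p/2) A B (by linarith) hA1 hBA
    have hApow : A^(p/2) = (ρ-1)^p := by
      rw [hA, ← Real.rpow_natCast (ρ-1) 2, ← Real.rpow_mul (by linarith)]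
      congr 1; push_cast; ring
    have hk : (ρ-1)/ρ ∈ Ico (1/2:ℝ) 1 := by
      constructor
      · rw [le_div_iff₀ hρ]; linarith
      · rw [div_lt_one hρ]; linarith
    have hmin : C ≤ Phi p ((ρ-1)/ρ) := hC ▸ phi_min p hp r₀ hr₀ hroot _ hk
    have hscale := phi_scale p ρ hp (by linarith)
    have hCρ : C * ρ^p ≤ (ρ-1)^p + p * ρ - 1 := by
      calc C * ρ^p ≤ Phi p ((ρ-1)/ρ) * ρ^p := mul_le_mul_of_nonneg_right hmin hρp.le
      _ = (ρ-1)^p + p * ρ - 1 := hscale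
    have hd : B - A = 2*(s+ρ) := by rw [hA, hB]; linear_combination -hρ2
    rw [hd] at key
    have hfin : (ρ-1)^p + p*s + p*ρ ≤ B^(p/2) := by
      rw [← hApow]; linarith
    linarith

set_option maxHeartbeats 1000000 in
lemma value_at (p : ℝ) (hp : 2 ≤ p) (r₀ : ℝ) (hr₀ : 1 ≤ r₀) :
    (((0:ℝ) ^ 2 + (-(1+r₀)) ^ 2 + 2 * (-(1+r₀)) + 1) ^ (p / 2) - 1 - p * (-(1+r₀))) /
      ((0:ℝ) ^ 2 + (-(1+r₀)) ^ 2) ^ (p / 2) = Phi p (r₀ / (1 + r₀)) := by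
  have hb : (0:ℝ) < 1 + r₀ := by linarith
  have hr0 : (0:ℝ) ≤ r₀ := by linarith
  have e1 : (0:ℝ) ^ 2 + (-(1+r₀)) ^ 2 + 2 * (-(1+r₀)) + 1 = r₀ ^ (2:ℕ) := by ring
  have e2 : (0:ℝ) ^ 2 + (-(1+r₀)) ^ 2 = (1+r₀) ^ (2:ℕ) := by ring
  have e3 : (r₀ ^ (2:ℕ) : ℝ) ^ (p/2) = r₀ ^ p := by
    rw [← Real.rpow_natCast r₀ 2, ← Real.rpow_mul hr0]
    congr 1; push_cast; ring
  have e4 : ((1+r₀) ^ (2:ℕ) : ℝ) ^ (p/2) = (1+r₀) ^ p := by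
    rw [← Real.rpow_natCast (1+r₀) 2, ← Real.rpow_mul hb.le]
    congr 1; push_cast; ring
  rw [e1, e2, e3, e4]
  have hscale := phi_scale p (1+r₀) hp (by linarith)
  rw [show (1+r₀) - 1 = r₀ by ring] at hscale
  have hbp : (0:ℝ) < (1+r₀) ^ p := Real.rpow_pos_of_pos hb _
  rw [div_eq_iff (ne_of_gt hbp), hscale]
  ring

set_option maxHeartbeats 1000000 in
/-- Sharp constant in the `C_p` lower bound (Huang–Tong): for `p ≥ 2`, if `r₀` is the (unique)
solution in `[1,∞)` of `r^{p-1} - (p-1)r - (p-2) = 0` and `k₀ = r₀/(1+r₀)`, then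
`c₁(p) = (p-1)(1-k₀)^p + p k₀ (1-k₀)^{p-1} + k₀^p > 0`. -/
theorem c1_sharp_formula (p : ℝ) (hp : 2 ≤ p) (r₀ : ℝ) (hr₀ : r₀ ∈ Set.Ici (1 : ℝ))
    (hroot : r₀ ^ (p - 1) - (p - 1) * r₀ - (p - 2) = 0)
    (k₀ : ℝ) (hk₀ : k₀ = r₀ / (1 + r₀)) :
    c1 p = (p - 1) * (1 - k₀) ^ p + p * k₀ * (1 - k₀) ^ (p - 1) + k₀ ^ p
      ∧ 0 < (p - 1) * (1 - k₀) ^ p + p * k₀ * (1 - k₀) ^ (p - 1) + k₀ ^ p := by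
  have hr₀' : (1:ℝ) ≤ r₀ := hr₀
  have hb : (0:ℝ) < 1 + r₀ := by linarith
  have hk₀0 : 0 < k₀ := by rw [hk₀]; positivity
  have hk₀1 : k₀ < 1 := by rw [hk₀, div_lt_one hb]; linarith
  have h1k₀ : (0:ℝ) < 1 - k₀ := by linarith
  have hCphi : (p - 1) * (1 - k₀) ^ p + p * k₀ * (1 - k₀) ^ (p - 1) + k₀ ^ p = Phi p k₀ := by
    have h : (1-k₀)^p = (1-k₀)^(p-1) * (1-k₀) := by
      rw [← Real.rpow_add_one (ne_of_gt h1k₀), show p - 1 + 1 = p by ring]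
    unfold Phi
    linear_combination p * h
  rw [hCphi, hk₀]
  constructor
  · unfold c1
    apply le_antisymm
    · apply csInf_le
      · exact ⟨Phi p (r₀/(1+r₀)), by
          rintro r ⟨s, t, hst, rfl⟩
          exact lower_bound p hp r₀ hr₀' hroot s t hst⟩
      · exact ⟨-(1+r₀), 0, by
          constructor
          · intro hcon
            have := hcon.1
            linarith
          · exact (value_at p hp r₀ hr₀').symm⟩
    · apply le_csInf
      · exact ⟨Phi p (r₀/(1+r₀)), -(1+r₀), 0, by
          constructor
          · intro hcon; have := hcon.1; linarith
          · exact (value_at p hp r₀ hr₀').symm⟩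
      · rintro r ⟨s, t, hst, rfl⟩
        exact lower_bound p hp r₀ hr₀' hroot s t hst
  · rw [← hk₀]
    exact phi_pos p hp hk₀0 hk₀1
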